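/- Convergence Lemma: Let G be a graph with quasi-Laplacian M = I - D⁻¹A, and let p be any vector. For disjoint sets L,R with U = L∪R, let β(L,R) be the bipartiteness ratio. Then pM(L,-R) ≤ J(p, vol(U)(1+β(L,R))) + J(p, vol(U)(1-β(L,R))), where pM(L,-R) = Σ_{v∈L}(pM)(v) - Σ_{v∈R}(pM)(v) and J is the potential function J(p,x) = max{Σ_v |p(v)|w(v) : w∈[0,1]^V, Σ_v w(v)d(v)=x}. -/

import Mathlib

open Finset Matrix

/-- The Lovász–Simonovits-style potential function
`J(p,x) = max { Σ_v |p(v)| w(v) : w ∈ [0,1]^V, Σ_v w(v) d(v) = x }`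
(extended by `J(p,x) = J(p, vol G)` for `x > vol G`). -/
noncomputable def Jpot {V : Type*} [Fintype V] (d : V → ℝ) (p : V → ℝ) (x : ℝ) : ℝ :=
  sSup {s : ℝ | ∃ w : V → ℝ, (∀ v, 0 ≤ w v ∧ w v ≤ 1)
    ∧ ∑ v, w v * d v = min x (∑ v, d v) ∧ s = ∑ v, |p v| * w v}

lemma Jpot_ge {V : Type*} [Fintype V] (d : V → ℝ) (hd0 : ∀ v, 0 < d v)
    (p : V → ℝ) (x : ℝ) (w : V → ℝ) (hw : ∀ v, 0 ≤ w v ∧ w v ≤ 1)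
    (hx : ∑ v, w v * d v ≤ x) :
    ∑ v, |p v| * w v ≤ Jpot d p x := by
  set S := ∑ v, d v with hS
  have hwS : ∑ v, w v * d v ≤ S := by
    apply Finset.sum_le_sum; intro v _
    nlinarith [(hw v).2, (hd0 v).le, (hw v).1]
  set y := min x S with hy
  have hwy : ∑ v, w v * d v ≤ y := le_min hx hwS
  have hyS : y ≤ S := min_le_right _ _
  have hbdd : BddAbove {s : ℝ | ∃ w : V → ℝ, (∀ v, 0 ≤ w v ∧ w v ≤ 1)
      ∧ ∑ v, w v * d v = min x (∑ v, d v) ∧ s = ∑ v, |p v| * w v} := by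
    refine ⟨∑ v, |p v|, ?_⟩
    rintro s ⟨w', hw', -, rfl⟩
    apply Finset.sum_le_sum; intro v _
    nlinarith [abs_nonneg (p v), (hw' v).2, (hw' v).1]
  by_cases hcase : ∑ v, w v * d v = S
  · have hyeq : y = ∑ v, w v * d v := le_antisymm (hcase ▸ hyS) hwy
    exact le_csSup hbdd ⟨w, hw, hyeq.symm, rfl⟩
  · have hlt : ∑ v, w v * d v < S := lt_of_le_of_ne hwS hcase
    set t := (y - ∑ v, w v * d v) / (S - ∑ v, w v * d v) with ht
    have ht0 : 0 ≤ t := div_nonneg (by linarith) (by linarith)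
    have ht1 : t ≤ 1 := (div_le_one (by linarith)).2 (by linarith)
    set w' := fun v => w v + t * (1 - w v) with hw'def
    have hw'mem : ∀ v, 0 ≤ w' v ∧ w' v ≤ 1 := by
      intro v
      constructor
      · have := (hw v).1; have := (hw v).2; simp only [hw'def]; nlinarith
      · have := (hw v).1; have := (hw v).2; simp only [hw'def]; nlinarith
    have hsum : ∑ v, w' v * d v = y := by
      have h1 : ∀ v ∈ Finset.univ, w' v * d v = w v * d v + t * (d v - w v * d v) := by
        intro v _; simp only [hw'def]; ring
      rw [Finset.sum_congr rfl h1, Finset.sum_add_distrib, ← Finset.mul_sum,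
        Finset.sum_sub_distrib]
      rw [ht, div_mul_cancel₀ _ (by linarith : S - ∑ v, w v * d v ≠ 0)]
      ring
    have hle : ∑ v, |p v| * w v ≤ ∑ v, |p v| * w' v := by
      apply Finset.sum_le_sum; intro v _
      have hwle : w v ≤ w' v := by
        simp only [hw'def]; nlinarith [(hw v).2]
      exact mul_le_mul_of_nonneg_left hwle (abs_nonneg _)
    exact hle.trans (le_csSup hbdd ⟨w', hw'mem, hsum, rfl⟩)

/-- Convergence Lemma: for any vector `p` and disjoint `L, R` with `U = L ∪ R`,
`pM(L,-R) ≤ J(p, vol(U)(1+β(L,R))) + J(p, vol(U)(1-β(L,R)))`. -/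
theorem convergence_lemma {V : Type*} [Fintype V] [DecidableEq V]
    (A : Matrix V V ℝ) (hA : A.IsSymm) (hA0 : ∀ v u, 0 ≤ A v u)
    (d : V → ℝ) (hd : ∀ v, d v = ∑ u, A v u) (hd0 : ∀ v, 0 < d v)
    (M : Matrix V V ℝ)
    (hM : ∀ v u, M v u = (if v = u then 1 else 0) - A v u / d v)
    (p : V → ℝ)
    (L R : Finset V) (hLR : Disjoint L R)
    (volU : ℝ) (hvolU : volU = ∑ v ∈ L ∪ R, d v) (hvolU0 : 0 < volU)
    (eL eR eOut : ℝ)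
    (heL : eL = (∑ u ∈ L, ∑ v ∈ L, A u v) / 2)
    (heR : eR = (∑ u ∈ R, ∑ v ∈ R, A u v) / 2)
    (heOut : eOut = ∑ u ∈ L ∪ R, ∑ v ∈ (L ∪ R)ᶜ, A u v)
    (β : ℝ) (hβ : β = (2 * eL + 2 * eR + eOut) / volU) :
    (∑ v ∈ L, (p ᵥ* M) v) - (∑ v ∈ R, (p ᵥ* M) v)
      ≤ Jpot d p (volU * (1 + β)) + Jpot d p (volU * (1 - β)) := by
  classical
  have hAsymm : ∀ u v, A u v = A v u := fun u v => (hA.apply v u)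
  set aL : V → ℝ := fun u => ∑ v ∈ L, A u v with haL
  set aR : V → ℝ := fun u => ∑ v ∈ R, A u v with haR
  set aO : V → ℝ := fun u => ∑ v ∈ (L ∪ R)ᶜ, A u v with haO
  -- degree split
  have hdsplit : ∀ u, d u = aL u + aR u + aO u := by
    intro u
    rw [hd u]
    rw [← Finset.sum_add_sum_compl (L ∪ R) (fun v => A u v)]
    rw [Finset.sum_union hLR]
  have haL0 : ∀ u, 0 ≤ aL u := fun u => Finset.sum_nonneg fun v _ => hA0 u v
  have haR0 : ∀ u, 0 ≤ aR u := fun u => Finset.sum_nonneg fun v _ => hA0 u v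
  have haO0 : ∀ u, 0 ≤ aO u := fun u => Finset.sum_nonneg fun v _ => hA0 u v
  set c : V → ℝ := fun u =>
    (if u ∈ L then (1:ℝ) else if u ∈ R then -1 else 0) - (aL u - aR u) / d u with hc
  -- rewrite LHS
  have hrow : ∀ (S : Finset V) (u : V),
      ∑ v ∈ S, M u v = (if u ∈ S then (1:ℝ) else 0) - (∑ v ∈ S, A u v) / d u := by
    intro S u
    simp only [hM]
    rw [Finset.sum_sub_distrib, Finset.sum_ite_eq, ← Finset.sum_div]
  have hvm : ∀ v, (p ᵥ* M) v = ∑ u, p u * M u v := by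
    intro v; simp [Matrix.vecMul, dotProduct]
  have hLHS : (∑ v ∈ L, (p ᵥ* M) v) - (∑ v ∈ R, (p ᵥ* M) v) = ∑ u, p u * c u := by
    simp only [hvm]
    rw [Finset.sum_comm, Finset.sum_comm (s := R)]
    rw [← Finset.sum_sub_distrib]
    apply Finset.sum_congr rfl
    intro u _
    rw [← Finset.mul_sum, ← Finset.mul_sum, ← mul_sub, hrow, hrow, hc]
    by_cases hL : u ∈ L
    · have hR : u ∉ R := Finset.disjoint_left.1 hLR hL
      simp only [hL, hR, if_true, if_false]
      ring
    · by_cases hR : u ∈ R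
      · simp only [hL, hR, if_true, if_false]; ring
      · simp only [hL, hR, if_true, if_false]; ring
  rw [hLHS]
  -- per-vertex facts
  have hsub1 : ∀ u, aL u - aR u ≤ d u := by
    intro u; have := hdsplit u; have := haR0 u; have := haO0 u; have := haL0 u; linarith
  have hsub2 : ∀ u, -(d u) ≤ aL u - aR u := by
    intro u; have := hdsplit u; have := haR0 u; have := haO0 u; have := haL0 u; linarith
  have hcL : ∀ u ∈ L, 0 ≤ c u ∧ |c u| * d u = d u - aL u + aR u := by
    intro u hu
    have hR : u ∉ R := Finset.disjoint_left.1 hLR hu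
    have hdu := hd0 u
    have hge : 0 ≤ c u := by
      simp only [hc, hu, hR, if_true]
      rw [sub_nonneg, div_le_one hdu]; exact hsub1 u
    refine ⟨hge, ?_⟩
    rw [abs_of_nonneg hge]
    simp only [hc, hu, if_true]
    field_simp
    ring
  have hcR : ∀ u ∈ R, |c u| * d u = d u + aL u - aR u := by
    intro u hu
    have hL : u ∉ L := Finset.disjoint_right.1 hLR hu
    have hdu := hd0 u
    have hle : c u ≤ 0 := by
      simp only [hc, hL, hu, if_false, if_true]
      have : -1 ≤ (aL u - aR u) / d u := by
        rw [neg_le, ← neg_div]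
        apply div_le_one_of_le₀ _ hdu.le
        linarith [hsub2 u]
      linarith
    rw [abs_of_nonpos hle]
    simp only [hc, hL, hu, if_false, if_true]
    field_simp
    ring
  have hcO : ∀ u, u ∉ L → u ∉ R → |c u| ≤ 1 := by
    intro u hL hR
    have hdu := hd0 u
    simp only [hc, hL, hR, if_false]
    rw [zero_sub, abs_neg, abs_div, abs_of_pos hdu, div_le_one hdu]
    rw [abs_le]; exact ⟨hsub2 u, hsub1 u⟩
  have hc2 : ∀ u, |c u| ≤ 2 := by
    intro u
    have hdu := hd0 u
    have hq : |(aL u - aR u) / d u| ≤ 1 := by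
      rw [abs_div, abs_of_pos hdu, div_le_one hdu, abs_le]
      exact ⟨hsub2 u, hsub1 u⟩
    have hs : |(if u ∈ L then (1:ℝ) else if u ∈ R then -1 else 0)| ≤ 1 := by
      split_ifs <;> simp
    calc |c u| ≤ |(if u ∈ L then (1:ℝ) else if u ∈ R then -1 else 0)|
        + |(aL u - aR u) / d u| := by simp only [hc]; exact abs_sub _ _
      _ ≤ 2 := by linarith
  -- the two weight functions
  set w₁ : V → ℝ := fun u => min |c u| 1 with hw₁
  set w₂ : V → ℝ := fun u => |c u| - min |c u| 1 with hw₂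
  have hw₁mem : ∀ u, 0 ≤ w₁ u ∧ w₁ u ≤ 1 := fun u =>
    ⟨le_min (abs_nonneg _) zero_le_one, min_le_right _ _⟩
  have hw₂mem : ∀ u, 0 ≤ w₂ u ∧ w₂ u ≤ 1 := by
    intro u
    constructor
    · simp only [hw₂, sub_nonneg]; exact min_le_left _ _
    · simp only [hw₂]
      rcases le_total |c u| 1 with h | h
      · rw [min_eq_left h]; linarith
      · rw [min_eq_right h]; linarith [hc2 u]
  -- symmetric edge-count identities
  have hsymLR : ∑ u ∈ R, aL u = ∑ u ∈ L, aR u := by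
    simp only [haL, haR]
    refine Finset.sum_comm.trans ?_
    exact Finset.sum_congr rfl fun u _ => Finset.sum_congr rfl fun v _ => hAsymm v u
  set eLR : ℝ := ∑ u ∈ L, aR u with heLR
  have heLR0 : 0 ≤ eLR := Finset.sum_nonneg fun u _ => haR0 u
  have hOsym : ∑ u ∈ (L ∪ R)ᶜ, (aL u + aR u) = eOut := by
    rw [heOut]
    have h1 : ∀ u, aL u + aR u = ∑ v ∈ L ∪ R, A u v := by
      intro u; rw [Finset.sum_union hLR]
    rw [Finset.sum_congr rfl fun u _ => h1 u]
    refine Finset.sum_comm.trans ?_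
    exact Finset.sum_congr rfl fun u _ => Finset.sum_congr rfl fun v _ => hAsymm v u
  have hvolid : volU = 2 * eL + 2 * eR + 2 * eLR + eOut := by
    rw [hvolU]
    have h1 : ∑ u ∈ L ∪ R, d u
        = (∑ u ∈ L ∪ R, aL u) + (∑ u ∈ L ∪ R, aR u) + (∑ u ∈ L ∪ R, aO u) := by
      rw [← Finset.sum_add_distrib, ← Finset.sum_add_distrib]
      exact Finset.sum_congr rfl fun u _ => hdsplit u
    rw [h1, Finset.sum_union hLR, Finset.sum_union hLR, heL, heR, ← heOut, hsymLR, heLR]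
    ring
  have hβv : volU * β = 2 * eL + 2 * eR + eOut := by
    rw [hβ]; field_simp
  have heL0 : 0 ≤ eL := by
    rw [heL]
    have : 0 ≤ ∑ u ∈ L, ∑ v ∈ L, A u v :=
      Finset.sum_nonneg fun u _ => Finset.sum_nonneg fun v _ => hA0 u v
    linarith
  have heR0 : 0 ≤ eR := by
    rw [heR]
    have : 0 ≤ ∑ u ∈ R, ∑ v ∈ R, A u v :=
      Finset.sum_nonneg fun u _ => Finset.sum_nonneg fun v _ => hA0 u v
    linarith
  have heOut0 : 0 ≤ eOut := by
    rw [heOut]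
    exact Finset.sum_nonneg fun u _ => Finset.sum_nonneg fun v _ => hA0 u v
  -- sum bound for w₁
  have hS1 : ∑ u, w₁ u * d u ≤ volU * (1 + β) := by
    have hsplit : ∑ u, w₁ u * d u
        = (∑ u ∈ L ∪ R, w₁ u * d u) + ∑ u ∈ (L ∪ R)ᶜ, w₁ u * d u :=
      (Finset.sum_add_sum_compl (L ∪ R) _).symm
    have hin : ∑ u ∈ L ∪ R, w₁ u * d u ≤ volU := by
      rw [hvolU]
      apply Finset.sum_le_sum
      intro u _
      nlinarith [(hw₁mem u).2, (hw₁mem u).1, (hd0 u).le]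
    have hout : ∑ u ∈ (L ∪ R)ᶜ, w₁ u * d u ≤ eOut := by
      rw [← hOsym]
      apply Finset.sum_le_sum
      intro u hu
      rw [Finset.mem_compl, Finset.mem_union] at hu
      push_neg at hu
      have h1 : w₁ u ≤ |c u| := min_le_left _ _
      have h2 : |c u| * d u ≤ aL u + aR u := by
        simp only [hc, hu.1, hu.2, if_false]
        rw [zero_sub, abs_neg, abs_div, abs_of_pos (hd0 u),
          div_mul_cancel₀ _ (hd0 u).ne']
        rw [abs_le]
        constructor <;> [linarith [haL0 u, haR0 u]; linarith [haL0 u, haR0 u]]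
      nlinarith [(hd0 u).le, abs_nonneg (c u)]
    have hβe : eOut ≤ volU * β := by rw [hβv]; linarith
    nlinarith [hin, hout, hsplit]
  -- sum bound for w₂
  have hS2 : ∑ u, w₂ u * d u ≤ volU * (1 - β) := by
    have h1β : volU * (1 - β) = 2 * eLR := by
      have : volU * (1 - β) = volU - volU * β := by ring
      rw [this, hβv, hvolid]; ring
    rw [h1β]
    have hsplit : ∑ u, w₂ u * d u
        = (∑ u ∈ L ∪ R, w₂ u * d u) + ∑ u ∈ (L ∪ R)ᶜ, w₂ u * d u :=
      (Finset.sum_add_sum_compl (L ∪ R) _).symm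
    have hout : ∑ u ∈ (L ∪ R)ᶜ, w₂ u * d u = 0 := by
      apply Finset.sum_eq_zero
      intro u hu
      rw [Finset.mem_compl, Finset.mem_union] at hu
      push_neg at hu
      have := hcO u hu.1 hu.2
      simp only [hw₂, min_eq_left this, sub_self, zero_mul]
    have hinL : ∑ u ∈ L, w₂ u * d u ≤ eLR := by
      rw [heLR]
      apply Finset.sum_le_sum
      intro u hu
      obtain ⟨hge, heq⟩ := hcL u hu
      rcases le_total |c u| 1 with h | h
      · simp only [hw₂, min_eq_left h, sub_self, zero_mul]; exact haR0 u
      · simp only [hw₂, min_eq_right h]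
        have : (|c u| - 1) * d u = |c u| * d u - d u := by ring
        rw [this, heq]
        linarith [haL0 u]
    have hinR : ∑ u ∈ R, w₂ u * d u ≤ eLR := by
      rw [← hsymLR]
      apply Finset.sum_le_sum
      intro u hu
      have heq := hcR u hu
      rcases le_total |c u| 1 with h | h
      · simp only [hw₂, min_eq_left h, sub_self, zero_mul]; exact haL0 u
      · simp only [hw₂, min_eq_right h]
        have : (|c u| - 1) * d u = |c u| * d u - d u := by ring
        rw [this, heq]
        linarith [haR0 u]
    rw [hsplit, hout, Finset.sum_union hLR]
    linarith
  -- put it together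
  have hmain : ∑ u, p u * c u ≤ (∑ u, |p u| * w₁ u) + ∑ u, |p u| * w₂ u := by
    rw [← Finset.sum_add_distrib]
    apply Finset.sum_le_sum
    intro u _
    have h1 : |p u| * w₁ u + |p u| * w₂ u = |p u| * |c u| := by
      simp only [hw₁, hw₂]; ring
    rw [h1, ← abs_mul]
    exact le_abs_self _
  exact hmain.trans (add_le_add
    (Jpot_ge d hd0 p _ w₁ hw₁mem hS1)
    (Jpot_ge d hd0 p _ w₂ hw₂mem hS2))
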